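/- Projections of the combined (spectral-width) embedding yield eigenvectors of both extreme eigenvalues (Proposition 7): let w ∈ ℝ^N with w_i ≥ 0 for all i, and set λ₂ := λ2(L(w)) (second smallest eigenvalue) and λₙ := λn(L(w)) (largest eigenvalue). Let U and V be n×n real matrices with X := UᵀU and Y := VᵀV satisfying the complementary-slackness conditions ⟨X, e_n e_nᵀ⟩ = 0, ⟨X, L(w) − λ₂·I⟩ = 0, and ⟨Y, λₙ·I − L(w)⟩ = 0. Then for every p ∈ ℝ^n: L(w)·(Uᵀp) = λ₂·(Uᵀp) and L(w)·(Vᵀp) = λₙ·(Vᵀp). -/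

import Mathlib

open Matrix

/-- Eigenvalues of a real symmetric matrix, listed in nondecreasing order with multiplicity
(junk value `0` if the matrix is not Hermitian). -/
noncomputable def sortedEigs {m : ℕ} (A : Matrix (Fin m) (Fin m) ℝ) : Fin m → ℝ :=
  if hA : A.IsHermitian then fun k => hA.eigenvalues (Tuple.sort hA.eigenvalues k) else 0

/-- The supra-Laplacian `L(w) = [[L1 + W, -W], [-W, L2 + W]]` of a two-layer multiplex,
as a matrix indexed by `Fin (N + N)`. -/
noncomputable def supraLap {N : ℕ} (L1 L2 : Matrix (Fin N) (Fin N) ℝ) (w : Fin N → ℝ) :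
    Matrix (Fin (N + N)) (Fin (N + N)) ℝ :=
  Matrix.reindex finSumFinEquiv finSumFinEquiv
    (Matrix.fromBlocks (L1 + Matrix.diagonal w) (-(Matrix.diagonal w))
      (-(Matrix.diagonal w)) (L2 + Matrix.diagonal w))

/-- The interlayer edge matrix `L_{i,i+N} = (δ_i - δ_{i+N})(δ_i - δ_{i+N})ᵀ`. -/
noncomputable def interE {N : ℕ} (i : Fin N) : Matrix (Fin (N + N)) (Fin (N + N)) ℝ :=
  Matrix.vecMulVec
    (Pi.single (Fin.castAdd N i) 1 - Pi.single (Fin.natAdd N i) 1)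
    (Pi.single (Fin.castAdd N i) 1 - Pi.single (Fin.natAdd N i) 1)

/-- The matrix inner product `⟨A, B⟩ = trace(AᵀB)`. -/
noncomputable def mip {m : ℕ} (A B : Matrix (Fin m) (Fin m) ℝ) : ℝ := (Aᵀ * B).trace

/-- The block-diagonal Laplacian `L0 = diag(L1, L2)` of the disjoint union of the layers. -/
noncomputable def L0big {N : ℕ} (L1 L2 : Matrix (Fin N) (Fin N) ℝ) :
    Matrix (Fin (N + N)) (Fin (N + N)) ℝ :=
  Matrix.reindex finSumFinEquiv finSumFinEquiv (Matrix.fromBlocks L1 0 0 L2)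

/-- The vector `z = (e; -e) ∈ ℝ^n`. -/
noncomputable def zvec (N : ℕ) : Fin (N + N) → ℝ :=
  fun k => if (k : ℕ) < N then 1 else -1

lemma mip_as_sum {m : ℕ} (M Q : Matrix (Fin m) (Fin m) ℝ) :
    mip (Qᵀ * Q) M = ∑ j, (fun k => Q j k) ⬝ᵥ (M *ᵥ fun k => Q j k) := by
  simp only [mip, Matrix.trace, Matrix.diag, transpose_mul, transpose_transpose,
    mul_apply, transpose_apply, dotProduct, mulVec, Finset.mul_sum, Finset.sum_mul]
  rw [Finset.sum_comm]
  trans ∑ y : Fin m, ∑ i : Fin m, ∑ x : Fin m, Q i x * Q i y * M y x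
  · exact Finset.sum_congr rfl fun y _ => Finset.sum_comm
  rw [Finset.sum_comm]
  exact Finset.sum_congr rfl fun i _ => Finset.sum_congr rfl fun b _ =>
    Finset.sum_congr rfl fun a _ => by ring

lemma psd_mul_transpose_eq_zero {m : ℕ} {M Q : Matrix (Fin m) (Fin m) ℝ}
    (hM : M.PosSemidef) (h : mip (Qᵀ * Q) M = 0) : M * Qᵀ = 0 := by
  rw [mip_as_sum] at h
  have hz : ∀ j ∈ Finset.univ, (fun k => Q j k) ⬝ᵥ (M *ᵥ fun k => Q j k) = 0 :=
    (Finset.sum_eq_zero_iff_of_nonneg (fun j _ => by simpa using hM.dotProduct_mulVec_nonneg (fun k => Q j k))).mp h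
  ext i j
  have h0 : M *ᵥ (fun k => Q j k) = 0 :=
    (hM.dotProduct_mulVec_zero_iff (fun k => Q j k)).mp
      (by simpa using hz j (Finset.mem_univ j))
  have : (M * Qᵀ) i j = (M *ᵥ fun k => Q j k) i := by
    simp [mul_apply, mulVec, dotProduct, transpose_apply]
  rw [this, h0]
  rfl

lemma mip_lin {m : ℕ} (X B C : Matrix (Fin m) (Fin m) ℝ) (c : ℝ) :
    mip X (B + c • C) = mip X B + c * mip X C := by
  rw [mip, mip, mip, Matrix.mul_add, Matrix.mul_smul, trace_add, trace_smul, smul_eq_mul]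

lemma diagHerm {N : ℕ} (w : Fin N → ℝ) : (Matrix.diagonal w)ᴴ = Matrix.diagonal w := by
  rw [diagonal_conjTranspose]
  congr 1

lemma blockHerm {N : ℕ} (L1 L2 : Matrix (Fin N) (Fin N) ℝ)
    (hL1 : L1.IsHermitian) (hL2 : L2.IsHermitian) (w : Fin N → ℝ) :
    (Matrix.fromBlocks (L1 + Matrix.diagonal w) (-(Matrix.diagonal w))
      (-(Matrix.diagonal w)) (L2 + Matrix.diagonal w)).IsHermitian := by
  show _ᴴ = _
  rw [fromBlocks_conjTranspose]
  rw [conjTranspose_add, conjTranspose_add, conjTranspose_neg, diagHerm, hL1.eq, hL2.eq]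

lemma lapHerm {N : ℕ} (L1 L2 : Matrix (Fin N) (Fin N) ℝ)
    (hL1 : L1.IsHermitian) (hL2 : L2.IsHermitian) (w : Fin N → ℝ) :
    (supraLap L1 L2 w).IsHermitian := by
  rw [supraLap, reindex_apply]
  exact (isHermitian_submatrix_equiv finSumFinEquiv.symm).mpr (blockHerm L1 L2 hL1 hL2 w)

lemma lapPSD {N : ℕ} (L1 L2 : Matrix (Fin N) (Fin N) ℝ)
    (hL1 : L1.PosSemidef) (hL2 : L2.PosSemidef) (w : Fin N → ℝ) (hw : ∀ i, 0 ≤ w i) :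
    (supraLap L1 L2 w).PosSemidef := by
  rw [supraLap, reindex_apply]
  rw [posSemidef_submatrix_equiv]
  refine PosSemidef.of_dotProduct_mulVec_nonneg (blockHerm L1 L2 hL1.1 hL2.1 w) fun x => ?_
  have hx : star x = x := by ext i; simp
  rw [hx, fromBlocks_mulVec]
  have hsplit : x ⬝ᵥ (Sum.elim ((L1 + Matrix.diagonal w) *ᵥ (x ∘ Sum.inl) + (-(Matrix.diagonal w)) *ᵥ (x ∘ Sum.inr))
      ((-(Matrix.diagonal w)) *ᵥ (x ∘ Sum.inl) + (L2 + Matrix.diagonal w) *ᵥ (x ∘ Sum.inr)))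
      = (x ∘ Sum.inl) ⬝ᵥ ((L1 + Matrix.diagonal w) *ᵥ (x ∘ Sum.inl) + (-(Matrix.diagonal w)) *ᵥ (x ∘ Sum.inr))
      + (x ∘ Sum.inr) ⬝ᵥ ((-(Matrix.diagonal w)) *ᵥ (x ∘ Sum.inl) + (L2 + Matrix.diagonal w) *ᵥ (x ∘ Sum.inr)) := by
    conv_lhs => rw [← Sum.elim_comp_inl_inr x]
    exact sumElim_dotProduct_sumElim _ _ _ _
  rw [hsplit]
  set x1 := x ∘ Sum.inl
  set x2 := x ∘ Sum.inr
  have e1 : ∀ u v : Fin N → ℝ, u ⬝ᵥ (Matrix.diagonal w *ᵥ v) = ∑ i, w i * u i * v i := by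
    intro u v
    simp only [dotProduct]
    exact Finset.sum_congr rfl fun i _ => by rw [mulVec_diagonal]; ring
  simp only [add_mulVec, neg_mulVec, dotProduct_add, dotProduct_neg]
  rw [e1, e1, e1, e1]
  have e2 : ∑ i, w i * x1 i * x1 i - ∑ i, w i * x1 i * x2 i - ∑ i, w i * x2 i * x1 i
      + ∑ i, w i * x2 i * x2 i = ∑ i, w i * (x1 i - x2 i)^2 := by
    rw [← Finset.sum_sub_distrib, ← Finset.sum_sub_distrib, ← Finset.sum_add_distrib]
    exact Finset.sum_congr rfl fun i _ => by ring
  have e3 : (0:ℝ) ≤ ∑ i, w i * (x1 i - x2 i)^2 :=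
    Finset.sum_nonneg fun i _ => mul_nonneg (hw i) (sq_nonneg _)
  have p1 : (0:ℝ) ≤ x1 ⬝ᵥ (L1 *ᵥ x1) := by simpa using hL1.dotProduct_mulVec_nonneg x1
  have p2 : (0:ℝ) ≤ x2 ⬝ᵥ (L2 *ᵥ x2) := by simpa using hL2.dotProduct_mulVec_nonneg x2
  linarith [e2]

lemma lapKer {N : ℕ} (L1 L2 : Matrix (Fin N) (Fin N) ℝ)
    (hL1e : L1 *ᵥ (fun _ => (1 : ℝ)) = 0) (hL2e : L2 *ᵥ (fun _ => (1 : ℝ)) = 0)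
    (w : Fin N → ℝ) : supraLap L1 L2 w *ᵥ (fun _ => (1:ℝ)) = 0 := by
  have h1 : (L1 + Matrix.diagonal w) *ᵥ (fun _ => (1:ℝ)) + (-(Matrix.diagonal w)) *ᵥ (fun _ => (1:ℝ)) = 0 := by
    rw [add_mulVec, neg_mulVec, hL1e, zero_add, add_neg_cancel]
  have h2 : (-(Matrix.diagonal w)) *ᵥ (fun _ => (1:ℝ)) + (L2 + Matrix.diagonal w) *ᵥ (fun _ => (1:ℝ)) = 0 := by
    rw [add_mulVec, neg_mulVec, hL2e, zero_add, neg_add_cancel]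
  have hb : ((Matrix.fromBlocks (L1 + Matrix.diagonal w) (-(Matrix.diagonal w))
      (-(Matrix.diagonal w)) (L2 + Matrix.diagonal w)) *ᵥ
      (((fun _ => (1:ℝ)) : Fin (N+N) → ℝ) ∘ ⇑finSumFinEquiv)) = 0 := by
    rw [fromBlocks_mulVec]
    show Sum.elim ((L1 + Matrix.diagonal w) *ᵥ (fun _ => (1:ℝ))
      + (-(Matrix.diagonal w)) *ᵥ (fun _ => (1:ℝ)))
      ((-(Matrix.diagonal w)) *ᵥ (fun _ => (1:ℝ))
      + (L2 + Matrix.diagonal w) *ᵥ (fun _ => (1:ℝ))) = 0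
    rw [h1, h2]
    ext k
    cases k <;> simp
  rw [supraLap, reindex_apply, submatrix_mulVec_equiv, Equiv.symm_symm, hb]
  ext k
  simp


variable {m : ℕ} {A : Matrix (Fin m) (Fin m) ℝ}

lemma PHt (hH : A.IsHermitian) :
    ((hH.eigenvectorUnitary : Matrix (Fin m) (Fin m) ℝ))ᴴ
      = ((hH.eigenvectorUnitary : Matrix (Fin m) (Fin m) ℝ))ᵀ := by
  ext i j; simp [conjTranspose_apply]

lemma specP (hH : A.IsHermitian) :
    A = (hH.eigenvectorUnitary : Matrix (Fin m) (Fin m) ℝ) * Matrix.diagonal hH.eigenvalues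
      * ((hH.eigenvectorUnitary : Matrix (Fin m) (Fin m) ℝ))ᵀ := by
  have := hH.spectral_theorem
  rwa [Unitary.conjStarAlgAut_apply, RCLike.ofReal_real_eq_id, Function.id_comp, Matrix.star_eq_conjTranspose, PHt hH] at this

lemma PPt (hH : A.IsHermitian) :
    (hH.eigenvectorUnitary : Matrix (Fin m) (Fin m) ℝ)
      * ((hH.eigenvectorUnitary : Matrix (Fin m) (Fin m) ℝ))ᵀ = 1 := by
  have := (Matrix.mem_unitaryGroup_iff).mp hH.eigenvectorUnitary.2
  rwa [Matrix.star_eq_conjTranspose, PHt hH] at this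

lemma PtP (hH : A.IsHermitian) :
    ((hH.eigenvectorUnitary : Matrix (Fin m) (Fin m) ℝ))ᵀ
      * (hH.eigenvectorUnitary : Matrix (Fin m) (Fin m) ℝ) = 1 := by
  have := (Matrix.mem_unitaryGroup_iff').mp hH.eigenvectorUnitary.2
  rwa [Matrix.star_eq_conjTranspose, PHt hH] at this

lemma dot_repr (hH : A.IsHermitian) (u x : Fin m → ℝ) :
    u ⬝ᵥ x = (((hH.eigenvectorUnitary : Matrix (Fin m) (Fin m) ℝ))ᵀ *ᵥ u)
      ⬝ᵥ (((hH.eigenvectorUnitary : Matrix (Fin m) (Fin m) ℝ))ᵀ *ᵥ x) := by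
  conv_rhs => rw [mulVec_transpose, ← dotProduct_mulVec, mulVec_mulVec, PPt hH, one_mulVec]

lemma quad_repr (hH : A.IsHermitian) (x : Fin m → ℝ) :
    x ⬝ᵥ (A *ᵥ x) = ∑ i, hH.eigenvalues i
      * ((((hH.eigenvectorUnitary : Matrix (Fin m) (Fin m) ℝ))ᵀ *ᵥ x) i)^2 := by
  set P := (hH.eigenvectorUnitary : Matrix (Fin m) (Fin m) ℝ)
  conv_lhs => rw [specP hH]
  rw [← mulVec_mulVec, ← mulVec_mulVec, dotProduct_mulVec, ← mulVec_transpose]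
  simp only [dotProduct, mulVec_diagonal]
  exact Finset.sum_congr rfl fun i _ => by ring

lemma norm_repr (hH : A.IsHermitian) (x : Fin m → ℝ) :
    x ⬝ᵥ x = ∑ i, ((((hH.eigenvectorUnitary : Matrix (Fin m) (Fin m) ℝ))ᵀ *ᵥ x) i)^2 := by
  rw [dot_repr hH x x]
  simp [dotProduct, pow_two]

lemma vmv_mulVec (u x : Fin m → ℝ) : vecMulVec u u *ᵥ x = (u ⬝ᵥ x) • u := by
  ext k
  simp only [mulVec, dotProduct, vecMulVec_apply, Pi.smul_apply, smul_eq_mul, Finset.sum_mul]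
  exact Finset.sum_congr rfl fun i _ => by ring

lemma quad_vmv (u x : Fin m → ℝ) : x ⬝ᵥ (vecMulVec u u *ᵥ x) = (u ⬝ᵥ x)^2 := by
  rw [vmv_mulVec, dotProduct_smul, smul_eq_mul, dotProduct_comm]
  ring

lemma vmv_herm (u : Fin m → ℝ) : (vecMulVec u u).IsHermitian := by
  show _ᴴ = _
  ext i j
  simp [conjTranspose_apply, vecMulVec_apply, mul_comm]

lemma vmv_psd (u : Fin m → ℝ) : (vecMulVec u u).PosSemidef := by
  refine PosSemidef.of_dotProduct_mulVec_nonneg (vmv_herm u) fun x => ?_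
  have hx : star x = x := by ext i; simp
  rw [hx, quad_vmv]
  exact sq_nonneg _

lemma herm_smul {B : Matrix (Fin m) (Fin m) ℝ} (c : ℝ) (h : B.IsHermitian) :
    (c • B).IsHermitian := by
  show _ᴴ = _
  rw [conjTranspose_smul, star_trivial, h.eq]

lemma herm_smul_one (c : ℝ) : ((c • (1 : Matrix (Fin m) (Fin m) ℝ))).IsHermitian :=
  herm_smul c isHermitian_one

lemma Mn_PSD (hm : 1 ≤ m) (hH : A.IsHermitian) {lamn : ℝ}
    (h : lamn = hH.eigenvalues (Tuple.sort hH.eigenvalues ⟨m - 1, by omega⟩)) :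
    (lamn • (1 : Matrix (Fin m) (Fin m) ℝ) - A).PosSemidef := by
  have hmax : ∀ i, hH.eigenvalues i ≤ lamn := by
    intro i
    have h1 : hH.eigenvalues i
        = (hH.eigenvalues ∘ Tuple.sort hH.eigenvalues) ((Tuple.sort hH.eigenvalues).symm i) := by
      simp
    rw [h1, h]
    exact Tuple.monotone_sort hH.eigenvalues
      (by rw [Fin.le_def]; exact (by omega : ((Tuple.sort hH.eigenvalues).symm i).val ≤ m - 1))
  refine PosSemidef.of_dotProduct_mulVec_nonneg ((herm_smul_one lamn).sub hH) fun x => ?_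
  have hx : star x = x := by ext i; simp
  rw [hx, sub_mulVec, smul_mulVec, one_mulVec, dotProduct_sub, dotProduct_smul,
    smul_eq_mul, quad_repr hH, norm_repr hH]
  rw [Finset.mul_sum, ← Finset.sum_sub_distrib]
  refine Finset.sum_nonneg fun i _ => ?_
  have := hmax i
  nlinarith [sq_nonneg ((((hH.eigenvectorUnitary : Matrix (Fin m) (Fin m) ℝ))ᵀ *ᵥ x) i)]

lemma M2_PSD (hm : 2 ≤ m) (hPSD : A.PosSemidef)
    (hKer : A *ᵥ (fun _ => (1:ℝ)) = 0) {lam2 : ℝ}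
    (h : lam2 = hPSD.1.eigenvalues (Tuple.sort hPSD.1.eigenvalues ⟨1, by omega⟩)) :
    (A - lam2 • (1 : Matrix (Fin m) (Fin m) ℝ)
      + (lam2 / (m:ℝ)) • vecMulVec (fun _ => (1:ℝ)) (fun _ => (1:ℝ))).PosSemidef := by
  have hH := hPSD.1
  set P := (hH.eigenvectorUnitary : Matrix (Fin m) (Fin m) ℝ) with hP
  set μ := hH.eigenvalues with hμ
  set σ := Tuple.sort hH.eigenvalues with hσ
  set e : Fin m → ℝ := fun _ => 1 with he
  set d : Fin m → ℝ := Pᵀ *ᵥ e with hd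
  have hμ0 : ∀ i, 0 ≤ μ i := fun i => hPSD.eigenvalues_nonneg i
  have hmono : Monotone (μ ∘ σ) := Tuple.monotone_sort hH.eigenvalues
  have hl2 : 0 ≤ lam2 := by rw [h]; exact hμ0 _
  have hdd : ∑ i, d i ^ 2 = (m : ℝ) := by
    have h1 : e ⬝ᵥ e = (m : ℝ) := by simp [he, dotProduct]
    have h2 := dot_repr hH e e
    rw [h1, ← hP, ← hd] at h2
    rw [h2]
    simp [dotProduct, pow_two]
  have hμd : ∀ i, μ i * d i = 0 := by
    have hDPt : Matrix.diagonal μ * Pᵀ = Pᵀ * A := by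
      conv_rhs => rw [specP hH]
      rw [← Matrix.mul_assoc, ← Matrix.mul_assoc, PtP hH, Matrix.one_mul]
    have h0 : Matrix.diagonal μ *ᵥ d = 0 := by
      rw [hd, mulVec_mulVec, hDPt, ← mulVec_mulVec, hKer, mulVec_zero]
    intro i
    have := congrFun h0 i
    rwa [mulVec_diagonal] at this
  refine PosSemidef.of_dotProduct_mulVec_nonneg ((hH.sub (herm_smul_one lam2)).add (herm_smul _ (vmv_herm e))) fun x => ?_
  have hx : star x = x := by ext i; simp
  set y : Fin m → ℝ := Pᵀ *ᵥ x with hy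
  have hex : e ⬝ᵥ x = d ⬝ᵥ y := by
    have := dot_repr hH e x
    rwa [← hP, ← hd, ← hy] at this
  have hexp : x ⬝ᵥ ((A - lam2 • (1 : Matrix (Fin m) (Fin m) ℝ)
      + (lam2 / (m:ℝ)) • vecMulVec e e) *ᵥ x)
      = ∑ i, μ i * y i ^ 2 - lam2 * ∑ i, y i ^ 2 + (lam2 / (m:ℝ)) * (d ⬝ᵥ y)^2 := by
    rw [add_mulVec, sub_mulVec, smul_mulVec, one_mulVec, smul_mulVec,
      dotProduct_add, dotProduct_sub, dotProduct_smul, dotProduct_smul, smul_eq_mul,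
      smul_eq_mul, quad_vmv, hex]
    have q1 := quad_repr hH x
    have q2 := norm_repr hH x
    rw [← hP, ← hy] at q1 q2
    rw [q1, q2, ← hμ]
  rw [hx, hexp]
  rcases eq_or_lt_of_le hl2 with h0 | hpos
  · rw [← h0]
    simp only [zero_mul, zero_div, sub_zero, add_zero, zero_smul]
    exact Finset.sum_nonneg fun i _ => mul_nonneg (hμ0 i) (sq_nonneg _)
  · set j : Fin m := σ ⟨0, by omega⟩ with hj
    have hkey : ∀ i, μ i = 0 → i = j := by
      intro i hi
      by_contra hne
      have hk : (1:ℕ) ≤ (σ.symm i).val := by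
        rcases Nat.eq_zero_or_pos (σ.symm i).val with h' | h'
        · exfalso
          apply hne
          have : σ.symm i = ⟨0, by omega⟩ := by apply Fin.ext; exact h'
          rw [hj, ← this, Equiv.apply_symm_apply]
        · omega
      have h12 : μ (σ ⟨1, by omega⟩) ≤ μ (σ (σ.symm i)) :=
        hmono (by rw [Fin.le_def]; exact hk)
      rw [Equiv.apply_symm_apply, hi] at h12
      rw [h] at hpos
      linarith
    have hd0 : ∀ i, i ≠ j → d i = 0 := by
      intro i hi
      rcases mul_eq_zero.mp (hμd i) with h' | h'
      · exact absurd (hkey i h') hi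
      · exact h'
    have hge : ∀ i, i ≠ j → lam2 ≤ μ i := by
      intro i hi
      have hk : (1:ℕ) ≤ (σ.symm i).val := by
        rcases Nat.eq_zero_or_pos (σ.symm i).val with h' | h'
        · exfalso
          apply hi
          have : σ.symm i = ⟨0, by omega⟩ := by apply Fin.ext; exact h'
          rw [hj, ← this, Equiv.apply_symm_apply]
        · omega
      have h12 : μ (σ ⟨1, by omega⟩) ≤ μ (σ (σ.symm i)) :=
        hmono (by rw [Fin.le_def]; exact hk)
      rwa [Equiv.apply_symm_apply, ← h] at h12
    have hdj : d j ^ 2 = (m:ℝ) := by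
      rw [← hdd]
      symm
      apply Finset.sum_eq_single
      · intro i _ hi; rw [hd0 i hi]; ring
      · intro hj'; exact absurd (Finset.mem_univ j) hj'
    have hsum : d ⬝ᵥ y = d j * y j := by
      show ∑ i, d i * y i = d j * y j
      apply Finset.sum_eq_single
      · intro i _ hi; rw [hd0 i hi]; ring
      · intro hj'; exact absurd (Finset.mem_univ j) hj'
    have hc : (lam2 / (m:ℝ)) * (d ⬝ᵥ y)^2 = lam2 * y j ^ 2 := by
      rw [hsum, mul_pow, hdj]
      have hm0 : ((m:ℝ)) ≠ 0 := by
        have : (0:ℝ) < m := by exact_mod_cast (by omega : 0 < m)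
        linarith
      field_simp
    rw [hc]
    have hsplit : ∑ i, μ i * y i ^ 2 - lam2 * ∑ i, y i ^ 2 + lam2 * y j ^ 2
        = ∑ i, ((μ i - lam2) * y i ^ 2 + (if i = j then lam2 * y j ^ 2 else 0)) := by
      rw [Finset.sum_add_distrib, Finset.sum_ite_eq' Finset.univ j,
        if_pos (Finset.mem_univ j)]
      have : ∑ i, (μ i - lam2) * y i ^ 2 = ∑ i, μ i * y i ^ 2 - lam2 * ∑ i, y i ^ 2 := by
        rw [Finset.mul_sum, ← Finset.sum_sub_distrib]
        exact Finset.sum_congr rfl fun i _ => by ring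
      rw [this]
    rw [hsplit]
    refine Finset.sum_nonneg fun i _ => ?_
    by_cases hij : i = j
    · rw [hij]
      simp only [if_pos rfl, eq_self_iff_true, if_true]
      nlinarith [mul_nonneg (hμ0 j) (sq_nonneg (y j))]
    · simp only [if_neg hij, add_zero]
      exact mul_nonneg (by linarith [hge i hij]) (sq_nonneg _)

/-- Projections of the combined (spectral-width) embedding yield eigenvectors of both
extreme eigenvalues: under the complementary-slackness conditions for `X = UᵀU` (with `λ₂`)
and `Y = VᵀV` (with `λₙ`), every projection `Uᵀp` is a `λ₂`-eigenvector and every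
projection `Vᵀp` is a `λₙ`-eigenvector of `L(w)`. -/
theorem stmt9 (N : ℕ) (hN : 1 ≤ N)
    (L1 L2 : Matrix (Fin N) (Fin N) ℝ)
    (hL1 : L1.PosSemidef) (hL2 : L2.PosSemidef)
    (hL1e : L1 *ᵥ (fun _ => (1 : ℝ)) = 0) (hL2e : L2 *ᵥ (fun _ => (1 : ℝ)) = 0)
    (w : Fin N → ℝ) (hw : ∀ i, 0 ≤ w i)
    (lam2 : ℝ) (hlam2 : lam2 = sortedEigs (supraLap L1 L2 w) ⟨1, by omega⟩)
    (lamn : ℝ) (hlamn : lamn = sortedEigs (supraLap L1 L2 w) ⟨N + N - 1, by omega⟩)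
    (U V : Matrix (Fin (N + N)) (Fin (N + N)) ℝ)
    (hXe : mip (Uᵀ * U) (Matrix.vecMulVec (fun _ => (1 : ℝ)) (fun _ => (1 : ℝ))) = 0)
    (hXs : mip (Uᵀ * U)
      (supraLap L1 L2 w - lam2 • (1 : Matrix (Fin (N + N)) (Fin (N + N)) ℝ)) = 0)
    (hYs : mip (Vᵀ * V)
      (lamn • (1 : Matrix (Fin (N + N)) (Fin (N + N)) ℝ) - supraLap L1 L2 w) = 0) :
    ∀ p : Fin (N + N) → ℝ,
      (supraLap L1 L2 w) *ᵥ (Uᵀ *ᵥ p) = lam2 • (Uᵀ *ᵥ p) ∧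
      (supraLap L1 L2 w) *ᵥ (Vᵀ *ᵥ p) = lamn • (Vᵀ *ᵥ p) := by
  
  have hH : (supraLap L1 L2 w).IsHermitian := lapHerm L1 L2 hL1.1 hL2.1 w
  have hPSD : (supraLap L1 L2 w).PosSemidef := lapPSD L1 L2 hL1 hL2 w hw
  have hKer : supraLap L1 L2 w *ᵥ (fun _ => (1:ℝ)) = 0 := lapKer L1 L2 hL1e hL2e w
  have hse : ∀ k, sortedEigs (supraLap L1 L2 w) k
      = hH.eigenvalues (Tuple.sort hH.eigenvalues k) := by
    intro k
    rw [sortedEigs, dif_pos hH]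
  have hl2' : lam2 = hH.eigenvalues (Tuple.sort hH.eigenvalues ⟨1, by omega⟩) :=
    hlam2.trans (hse _)
  have hln' : lamn = hH.eigenvalues (Tuple.sort hH.eigenvalues ⟨N + N - 1, by omega⟩) :=
    hlamn.trans (hse _)
  have hM2 : (supraLap L1 L2 w - lam2 • (1 : Matrix (Fin (N + N)) (Fin (N + N)) ℝ)
      + (lam2 / ((N + N : ℕ):ℝ)) • vecMulVec (fun _ => (1:ℝ)) (fun _ => (1:ℝ))).PosSemidef :=
    M2_PSD (by omega) hPSD hKer hl2'
  have hMn : (lamn • (1 : Matrix (Fin (N + N)) (Fin (N + N)) ℝ)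
      - supraLap L1 L2 w).PosSemidef := Mn_PSD (by omega) hH hln'
  have hmip2 : mip (Uᵀ * U) (supraLap L1 L2 w
      - lam2 • (1 : Matrix (Fin (N + N)) (Fin (N + N)) ℝ)
      + (lam2 / ((N + N : ℕ):ℝ)) • vecMulVec (fun _ => (1:ℝ)) (fun _ => (1:ℝ))) = 0 := by
    rw [mip_lin, hXs, hXe, zero_add, mul_zero]
  have hMU := psd_mul_transpose_eq_zero hM2 hmip2
  have hEU := psd_mul_transpose_eq_zero (vmv_psd (fun _ => (1:ℝ))) hXe
  rw [Matrix.add_mul, smul_mul_assoc, hEU, smul_zero, add_zero, Matrix.sub_mul,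
    smul_mul_assoc, Matrix.one_mul, sub_eq_zero] at hMU
  have hMV := psd_mul_transpose_eq_zero hMn hYs
  rw [Matrix.sub_mul, smul_mul_assoc, Matrix.one_mul, sub_eq_zero] at hMV
  intro p
  constructor
  · rw [mulVec_mulVec, hMU, smul_mulVec]
  · rw [mulVec_mulVec, ← hMV, smul_mulVec]
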